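/- Run Algorithm 2 in the semiclairvoyant model SC[ρ] (with predictions p̃(q) = ρ^{⌊log_ρ p(q)⌋} and μ = ρ), and let θ' = ⌈ρ⌉. If a job q is released at time t (the procedure UponJobRelease(q) is called), then for every real x ≥ 0: cov(x + θ', t) ≥ cov(x, t⁻) + p(q). -/

import Mathlib

open MeasureTheory
open scoped Classical

noncomputable section

/-- A configuration of Algorithm 2: the pending jobs are kept in two bins,
a full bin `QF` and a partial bin `QP`; each bin carries a bijective priority map
onto `{1, …, size of bin}`, and every pending job has a remaining processing time. -/
structure Config (n : ℕ) where
  QF : Finset (Fin n)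
  QP : Finset (Fin n)
  rem : Fin n → ℝ
  prF : Fin n → ℕ
  prP : Fin n → ℕ
  disj : Disjoint QF QP
  bijF : Set.BijOn prF (QF : Set (Fin n)) (Set.Icc 1 QF.card)
  bijP : Set.BijOn prP (QP : Set (Fin n)) (Set.Icc 1 QP.card)

variable {n : ℕ}

/-- `wbase q`: the number of jobs in `q`'s own bin whose priority is at most that
of `q` (for unit weights this is the total weight of `base(q)`). -/
def wbase (C : Config n) (q : Fin n) : ℕ :=
  if q ∈ C.QF then (C.QF.filter fun a => C.prF a ≤ C.prF q).card
  else (C.QP.filter fun a => C.prP a ≤ C.prP q).card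

/-- The volume covered by a bar at height `x`: the sum over pending jobs `q`
of the remaining processing time of `q` if `x ≥ wbase q`, and `0` otherwise. -/
def cov (C : Config n) (x : ℝ) : ℝ :=
  ∑ q ∈ C.QF ∪ C.QP, if (wbase C q : ℝ) ≤ x then C.rem q else 0

/-- `V`: the total remaining volume of pending jobs. -/
def vol (C : Config n) : ℝ :=
  ∑ q ∈ C.QF ∪ C.QP, C.rem q

/-- The ordered pair `(q₁, q₂)` of jobs of the full bin is a violation if `q₁` has
higher priority but `μ · p̃ q₂ ≤ p̃ q₁`. -/
def IsViolation (μ : ℝ) (pt : Fin n → ℝ) (C : Config n) (q₁ q₂ : Fin n) : Prop :=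
  q₁ ∈ C.QF ∧ q₂ ∈ C.QF ∧ C.prF q₂ < C.prF q₁ ∧ μ * pt q₂ ≤ pt q₁

/-- No ordered pair of jobs of the full bin forms a violation. -/
def NoViolations (μ : ℝ) (pt : Fin n → ℝ) (C : Config n) : Prop :=
  ∀ q₁ q₂, ¬ IsViolation μ pt C q₁ q₂

/-- The priorities of the full bin after releasing job `q`: `q` is first inserted at the
top (priority `|QF| + 1`), and then the cyclic rotation fixing all the violations
involving `q` is applied: `q` receives the lowest priority of a job in violation with
it, each job in violation with `q` moves up to the priority of the next higher-priority
violating job (the highest-priority one receiving `q`'s top priority `|QF| + 1`),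
and all other priorities are unchanged. -/
def rotatedPr (μ : ℝ) (pt : Fin n → ℝ) (C : Config n) (q : Fin n) : Fin n → ℕ :=
  fun a =>
    if a = q then
      WithBot.unbotD (C.QF.card + 1) ((C.QF.filter fun b => μ * pt b ≤ pt q).image C.prF).min
    else if a ∈ C.QF.filter (fun b => μ * pt b ≤ pt q) then
      WithBot.unbotD (C.QF.card + 1)
        ((((C.QF.filter fun b => μ * pt b ≤ pt q).filter
            fun b => C.prF a < C.prF b).image C.prF).min)
    else C.prF a

/-- `UponJobRelease q` of Algorithm 2 turns configuration `C` into `C'`: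
the new job `q` (full, so its remaining time is `p q`) enters the full bin and the
rotation fixing all violations involving `q` is applied. -/
def ReleaseStep (μ : ℝ) (p pt : Fin n → ℝ) (C C' : Config n) (q : Fin n) : Prop :=
  q ∉ C.QF ∧ q ∉ C.QP ∧
  C'.QF = insert q C.QF ∧ C'.QP = C.QP ∧
  C'.rem q = p q ∧ (∀ a, a ≠ q → C'.rem a = C.rem a) ∧
  (∀ a ∈ C'.QF, C'.prF a = rotatedPr μ pt C q a) ∧
  (∀ a ∈ C.QP, C'.prP a = C.prP a)

/-- `UponHeavyF` of Algorithm 2 turns configuration `C` into `C'`: it is called as soon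
as `|QF| > |QP|` (so `|QF| = |QP| + 1`), and it moves the top-priority job of the full
bin to the top priority of the partial bin (LIFO). -/
def MoveStep (C C' : Config n) (q : Fin n) : Prop :=
  C.QF.card = C.QP.card + 1 ∧ q ∈ C.QF ∧ C.prF q = C.QF.card ∧
  C'.QF = C.QF.erase q ∧ C'.QP = insert q C.QP ∧ C'.rem = C.rem ∧
  (∀ a ∈ C'.QF, C'.prF a = C.prF a) ∧ (∀ a ∈ C.QP, C'.prP a = C.prP a) ∧
  C'.prP q = C.QP.card + 1

/-- Processing for a duration `d`: the top-priority job of the partial bin is processed,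
decreasing its remaining time by `d`. -/
def ProcessStep (C C' : Config n) (q : Fin n) (d : ℝ) : Prop :=
  C.QF.card ≤ C.QP.card ∧ q ∈ C.QP ∧ C.prP q = C.QP.card ∧
  0 ≤ d ∧ d ≤ C.rem q ∧
  C'.QF = C.QF ∧ C'.QP = C.QP ∧ C'.prF = C.prF ∧ C'.prP = C.prP ∧
  C'.rem q = C.rem q - d ∧ (∀ a, a ≠ q → C'.rem a = C.rem a)

/-- A fully processed job (the top-priority job of the partial bin, with zero
remaining time) is completed and leaves the system. -/
def CompleteStep (C C' : Config n) (q : Fin n) : Prop :=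
  q ∈ C.QP ∧ C.prP q = C.QP.card ∧ C.rem q = 0 ∧
  C'.QF = C.QF ∧ C'.QP = C.QP.erase q ∧ C'.prF = C.prF ∧
  (∀ a ∈ C'.QP, C'.prP a = C.prP a) ∧ C'.rem = C.rem
lemma bij_filter_card {α : Type*} (s : Finset α) (m : ℕ) (pr : α → ℕ)
    (h : Set.BijOn pr (s : Set α) (Set.Icc 1 m)) {a : α} (ha : a ∈ s) :
    (s.filter fun b => pr b ≤ pr a).card = pr a := by
  have h1 : 1 ≤ pr a := (h.mapsTo ha).1
  have h2 : pr a ≤ m := (h.mapsTo ha).2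
  have key : (s.filter fun b => pr b ≤ pr a).card = (Finset.Icc 1 (pr a)).card := by
    apply Finset.card_bij (fun b _ => pr b)
    · intro b hb
      rw [Finset.mem_filter] at hb
      exact Finset.mem_Icc.mpr ⟨(h.mapsTo hb.1).1, hb.2⟩
    · intro b1 hb1 b2 hb2 he
      exact h.injOn (Finset.mem_coe.mpr (Finset.mem_filter.mp hb1).1)
        (Finset.mem_coe.mpr (Finset.mem_filter.mp hb2).1) he
    · intro j hj
      rw [Finset.mem_Icc] at hj
      obtain ⟨b, hb, hpb⟩ := h.surjOn (Set.mem_Icc.mpr ⟨hj.1, hj.2.trans h2⟩)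
      exact ⟨b, Finset.mem_filter.mpr ⟨Finset.mem_coe.mp hb, by rw [hpb]; exact hj.2⟩, hpb⟩
  rw [key, Nat.card_Icc]
  omega

lemma wbase_of_memF {n : ℕ} (C : Config n) {a : Fin n} (ha : a ∈ C.QF) :
    wbase C a = C.prF a := by
  rw [wbase, if_pos ha]
  exact bij_filter_card C.QF C.QF.card C.prF C.bijF ha

lemma wbase_of_memP {n : ℕ} (C : Config n) {a : Fin n} (ha : a ∈ C.QP) :
    wbase C a = C.prP a := by
  have h : a ∉ C.QF := fun h => (Finset.disjoint_left.mp C.disj h) ha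
  rw [wbase, if_neg h]
  exact bij_filter_card C.QP C.QP.card C.prP C.bijP ha

lemma unbot'_min_empty (d : ℕ) : WithBot.unbotD d (∅ : Finset ℕ).min = d := rfl

lemma unbot'_min_coe (d : ℕ) {s : Finset ℕ} (h : s.Nonempty) :
    WithBot.unbotD d s.min = s.min' h := by
  conv_lhs => rw [← Finset.coe_min' h]
  rfl

lemma unbot'_min_eq {s : Finset ℕ} {d v : ℕ} (hv : v ∈ s) (hlb : ∀ y ∈ s, v ≤ y) :
    WithBot.unbotD d s.min = v := by
  have hne : s.Nonempty := ⟨v, hv⟩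
  rw [unbot'_min_coe d hne]
  exact le_antisymm (Finset.min'_le s v hv) (Finset.le_min' s hne v hlb)

/-- Run Algorithm 2 in the semiclairvoyant model `SC[ρ]` (the
predictions are `p̃(q) = ρ^{⌊log_ρ p(q)⌋}` and the parameter is `μ = ρ`), and let
`θ' = ⌈ρ⌉`.  If a job `q` is released at time `t` (the configuration just before the
release having, per the invariants of the run, full jobs in the full bin and no
violations), then for every `x ≥ 0`: `cov(x + θ', t) ≥ cov(x, t⁻) + p(q)`. -/
theorem semiclairvoyant_release_cov_gain
    (n : ℕ) (ρ : ℝ) (hρ : 1 < ρ) (p pt : Fin n → ℝ)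
    (hp : ∀ q, 0 < p q)
    (hpt : ∀ q, pt q = ρ ^ ⌊Real.logb ρ (p q)⌋)
    (C C' : Config n) (q : Fin n)
    (hfull : ∀ a ∈ C.QF, C.rem a = p a)
    (hrem : ∀ a, 0 ≤ C.rem a)
    (hnv : NoViolations ρ pt C)
    (hstep : ReleaseStep ρ p pt C C' q) :
    ∀ x : ℝ, 0 ≤ x → cov C x + p q ≤ cov C' (x + ((⌈ρ⌉ : ℤ) : ℝ)) := by
  obtain ⟨hqF, hqP, hQF', hQP', hremq, hrema, hprF', hprP'⟩ := hstep
  intro x hx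
  have hρ0 : (0:ℝ) < ρ := lt_trans one_pos hρ
  have hρ0' : ρ ≠ 0 := ne_of_gt hρ0
  set m := C.QF.card with hm
  have hptk : ∀ a, pt a = ρ ^ (⌊Real.logb ρ (p a)⌋ : ℤ) := hpt
  set k : Fin n → ℤ := fun a => ⌊Real.logb ρ (p a)⌋ with hkdef
  have hpt0 : ∀ a, 0 < pt a := fun a => by rw [hptk]; positivity
  have hptle : ∀ a, pt a ≤ p a := by
    intro a
    rw [hptk, ← Real.rpow_intCast]
    calc ρ ^ ((⌊Real.logb ρ (p a)⌋ : ℤ) : ℝ) ≤ ρ ^ Real.logb ρ (p a) :=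
          Real.rpow_le_rpow_of_exponent_le hρ.le (Int.floor_le _)
      _ = p a := Real.rpow_logb hρ0 (ne_of_gt hρ) (hp a)
  have hplt : ∀ a, p a < ρ * pt a := by
    intro a
    have h1 : ρ * pt a = ρ ^ (k a + 1) := by
      rw [hptk, zpow_add_one₀ hρ0']; ring
    rw [h1, ← Real.rpow_intCast]
    calc p a = ρ ^ Real.logb ρ (p a) := (Real.rpow_logb hρ0 (ne_of_gt hρ) (hp a)).symm
      _ < ρ ^ ((k a + 1 : ℤ) : ℝ) := by
          apply Real.rpow_lt_rpow_of_exponent_lt hρ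
          push_cast
          exact Int.lt_floor_add_one _
  have hmulk : ∀ a b : Fin n, (ρ * pt a ≤ pt b) ↔ k a + 1 ≤ k b := by
    intro a b
    rw [hptk, hptk, show ρ * ρ ^ (k a) = ρ ^ (k a + 1) by rw [zpow_add_one₀ hρ0']; ring]
    exact zpow_le_zpow_iff_right₀ hρ
  have hptmono : ∀ a b : Fin n, k a ≤ k b → pt a ≤ pt b := by
    intro a b h
    rw [hptk, hptk]
    exact zpow_le_zpow_right₀ hρ.le h
  set S := C.QF.filter (fun b => ρ * pt b ≤ pt q) with hSdef
  have hSsub : S ⊆ C.QF := Finset.filter_subset _ _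
  have hnotSk : ∀ a ∈ C.QF, a ∉ S → k q ≤ k a := by
    intro a haF haS
    have h : ¬ (ρ * pt a ≤ pt q) := fun h => haS (Finset.mem_filter.mpr ⟨haF, h⟩)
    rw [hmulk] at h
    omega
  have hnotS : ∀ a ∈ C.QF, a ∉ S → pt q ≤ pt a := fun a haF haS =>
    hptmono _ _ (hnotSk a haF haS)
  have hsuffix : ∀ a ∈ C.QF, a ∉ S → ∀ b ∈ S, C.prF a < C.prF b := by
    intro a haF haS b hbS
    have hbF : b ∈ C.QF := hSsub hbS
    have hkb : k b + 1 ≤ k q := (hmulk b q).mp (Finset.mem_filter.mp hbS).2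
    have hka : k q ≤ k a := hnotSk a haF haS
    rcases lt_trichotomy (C.prF a) (C.prF b) with h | h | h
    · exact h
    · exfalso
      have : a = b := C.bijF.injOn (Finset.mem_coe.mpr haF) (Finset.mem_coe.mpr hbF) h
      exact haS (this ▸ hbS)
    · exact absurd ⟨haF, hbF, h, (hmulk b a).mpr (by omega)⟩ (hnv a b)
  set k₀ := WithBot.unbotD (m + 1) ((S.image C.prF).min) with hk₀
  have hprFle : ∀ a ∈ C.QF, 1 ≤ C.prF a ∧ C.prF a ≤ m := fun a ha =>
    ⟨(C.bijF.mapsTo (Finset.mem_coe.mpr ha)).1, (C.bijF.mapsTo (Finset.mem_coe.mpr ha)).2⟩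
  have hk0facts : (∀ a ∈ C.QF, a ∉ S → C.prF a < k₀) ∧ (∀ b ∈ S, k₀ ≤ C.prF b)
      ∧ k₀ ≤ m + 1 := by
    by_cases hS : S.Nonempty
    · obtain ⟨b₀, hb₀S, hb₀⟩ := Finset.mem_image.mp ((S.image C.prF).min'_mem (hS.image _))
      have hk0j : k₀ = C.prF b₀ := by
        rw [hk₀, unbot'_min_coe _ (hS.image _)]
        exact hb₀.symm
      refine ⟨?_, ?_, ?_⟩
      · intro a haF haS
        rw [hk0j]
        exact hsuffix a haF haS b₀ hb₀S
      · intro b hbS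
        rw [hk0j, hb₀]
        exact Finset.min'_le _ _ (Finset.mem_image_of_mem _ hbS)
      · rw [hk0j]
        have := (hprFle b₀ (hSsub hb₀S)).2
        omega
    · rw [Finset.not_nonempty_iff_eq_empty] at hS
      have hk0e : k₀ = m + 1 := by
        rw [hk₀, hS, Finset.image_empty]
        exact unbot'_min_empty _
      refine ⟨?_, ?_, ?_⟩
      · intro a haF _
        have := (hprFle a haF).2
        omega
      · intro b hbS
        rw [hS] at hbS
        exact absurd hbS (Finset.notMem_empty b)
      · omega
  obtain ⟨hF1, hF2, hF3⟩ := hk0facts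
  have hqne : ∀ a ∈ C.QF, a ≠ q := fun a ha h => hqF (h ▸ ha)
  have hR1 : rotatedPr ρ pt C q q = k₀ := by
    rw [rotatedPr, if_pos rfl]
  have hR2 : ∀ a ∈ C.QF, a ∉ S → rotatedPr ρ pt C q a = C.prF a := by
    intro a haF haS
    rw [rotatedPr, if_neg (hqne a haF), if_neg haS]
  have hR3 : ∀ b ∈ S, rotatedPr ρ pt C q b = C.prF b + 1 := by
    intro b hbS
    have hbF : b ∈ C.QF := hSsub hbS
    have hble := hprFle b hbF
    rw [rotatedPr, if_neg (hqne b hbF), if_pos hbS]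
    by_cases hbm : C.prF b = m
    · have hempty : (S.filter fun c => C.prF b < C.prF c) = ∅ := by
        rw [Finset.filter_eq_empty_iff]
        intro c hcS
        have := (hprFle c (hSsub hcS)).2
        omega
      rw [hempty, Finset.image_empty, unbot'_min_empty]
      omega
    · have hblt : C.prF b < m := lt_of_le_of_ne hble.2 hbm
      obtain ⟨c, hcF, hpc⟩ := C.bijF.surjOn (Set.mem_Icc.mpr
        (⟨by omega, by omega⟩ : 1 ≤ C.prF b + 1 ∧ C.prF b + 1 ≤ m))
      have hcF' : c ∈ C.QF := Finset.mem_coe.mp hcF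
      have hcS : c ∈ S := by
        by_contra hcS
        have h1 := hF1 c hcF' hcS
        have h2 := hF2 b hbS
        omega
      apply unbot'_min_eq
      · rw [← hpc]
        exact Finset.mem_image_of_mem _ (Finset.mem_filter.mpr ⟨hcS, by omega⟩)
      · intro y hy
        obtain ⟨d, hd, hdy⟩ := Finset.mem_image.mp hy
        have := (Finset.mem_filter.mp hd).2
        omega
  -- configuration after the release
  have hqF' : q ∈ C'.QF := by rw [hQF']; exact Finset.mem_insert_self _ _
  have hmemF' : ∀ a ∈ C.QF, a ∈ C'.QF := fun a ha => by
    rw [hQF']; exact Finset.mem_insert_of_mem ha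
  have hw'F : ∀ a ∈ C'.QF, wbase C' a = rotatedPr ρ pt C q a := fun a ha =>
    (wbase_of_memF C' ha).trans (hprF' a ha)
  have hwq : wbase C' q = k₀ := (hw'F q hqF').trans hR1
  have hwP : ∀ a ∈ C.QP, wbase C' a = wbase C a := by
    intro a ha
    have ha' : a ∈ C'.QP := by rw [hQP']; exact ha
    rw [wbase_of_memP C' ha', wbase_of_memP C ha, hprP' a ha]
  have hremF : ∀ a ∈ C.QF, C'.rem a = C.rem a := fun a ha =>
    hrema a (fun h => hqF (h ▸ ha))
  have hremP : ∀ a ∈ C.QP, C'.rem a = C.rem a := fun a ha =>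
    hrema a (fun h => hqP (h ▸ ha))
  set θ : ℝ := ((⌈ρ⌉ : ℤ) : ℝ) with hθdef
  have hθρ : ρ ≤ θ := Int.le_ceil ρ
  have hθ1 : (1:ℝ) ≤ θ := hρ.le.trans hθρ
  set t : ℕ := (⌈ρ⌉).toNat with ht
  have htθ : (t : ℝ) = θ := by
    have h0 : ((⌈ρ⌉).toNat : ℤ) = ⌈ρ⌉ := Int.toNat_of_nonneg (Int.ceil_nonneg hρ0.le)
    rw [hθdef, ht, ← h0]
    norm_cast
  -- the two covered-volume sums
  have hqU : q ∉ C.QF ∪ C.QP := fun h => (Finset.mem_union.mp h).elim hqF hqP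
  have hcov' : cov C' (x + θ) = (if (wbase C' q : ℝ) ≤ x + θ then C'.rem q else 0)
      + ∑ a ∈ C.QF ∪ C.QP, (if (wbase C' a : ℝ) ≤ x + θ then C'.rem a else 0) := by
    rw [cov, show C'.QF ∪ C'.QP = insert q (C.QF ∪ C.QP) by
      rw [hQF', hQP', Finset.insert_union], Finset.sum_insert hqU]
  have hcov : cov C x = ∑ a ∈ C.QF ∪ C.QP,
      (if (wbase C a : ℝ) ≤ x then C.rem a else 0) := rfl
  -- pointwise monotonicity
  have hpw : ∀ a ∈ C.QF ∪ C.QP,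
      (if (wbase C a : ℝ) ≤ x then C.rem a else 0)
        ≤ (if (wbase C' a : ℝ) ≤ x + θ then C'.rem a else 0) := by
    intro a ha
    rcases Finset.mem_union.mp ha with haF | haP
    · have hra : C'.rem a = C.rem a := hremF a haF
      have hwa : wbase C a = C.prF a := wbase_of_memF C haF
      have hwa' : wbase C' a ≤ C.prF a + 1 := by
        rw [hw'F a (hmemF' a haF)]
        by_cases haS : a ∈ S
        · rw [hR3 a haS]
        · rw [hR2 a haF haS]; omega
      by_cases hc : (wbase C a : ℝ) ≤ x
      · have hcond : (wbase C' a : ℝ) ≤ x + θ := by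
          have h1 : (wbase C' a : ℝ) ≤ (wbase C a : ℝ) + 1 := by
            have : wbase C' a ≤ wbase C a + 1 := by omega
            exact_mod_cast this
          linarith
        rw [if_pos hc, if_pos hcond, hra]
      · rw [if_neg hc]
        split
        · rw [hra]; exact hrem a
        · exact le_refl 0
    · have hra : C'.rem a = C.rem a := hremP a haP
      have hw : wbase C' a = wbase C a := hwP a haP
      by_cases hc : (wbase C a : ℝ) ≤ x
      · have hcond : (wbase C' a : ℝ) ≤ x + θ := by rw [hw]; linarith
        rw [if_pos hc, if_pos hcond, hra]
      · rw [if_neg hc]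
        split
        · rw [hra]; exact hrem a
        · exact le_refl 0
  have hsumU : ∑ a ∈ C.QF ∪ C.QP, (if (wbase C a : ℝ) ≤ x then C.rem a else 0)
      ≤ ∑ a ∈ C.QF ∪ C.QP, (if (wbase C' a : ℝ) ≤ x + θ then C'.rem a else 0) :=
    Finset.sum_le_sum hpw
  by_cases hcase : (k₀ : ℝ) ≤ x + θ
  · -- the new job itself is covered
    have hgq : (if (wbase C' q : ℝ) ≤ x + θ then C'.rem q else 0) = p q := by
      rw [if_pos (by rw [hwq]; exact hcase), hremq]
    rw [hcov, hcov', hgq]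
    linarith
  · push_neg at hcase
    -- the new job may be uncovered, but θ' newly covered full jobs compensate
    set T := C.QF.filter (fun a => x < (C.prF a : ℝ) ∧ (C.prF a : ℝ) ≤ x + θ) with hT
    have hTsub : T ⊆ C.QF ∪ C.QP :=
      (Finset.filter_subset _ _).trans Finset.subset_union_left
    have hTnotS : ∀ a ∈ T, a ∉ S := by
      intro a haT haS
      have h2 := hF2 a haS
      have h3 := (Finset.mem_filter.mp haT).2.2
      have h4 : (k₀ : ℝ) ≤ (C.prF a : ℝ) := by exact_mod_cast h2
      linarith
    have hTgain : ∀ a ∈ T, (if (wbase C a : ℝ) ≤ x then C.rem a else 0) + pt q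
        ≤ (if (wbase C' a : ℝ) ≤ x + θ then C'.rem a else 0) := by
      intro a haT
      obtain ⟨haF, hax, haxθ⟩ := Finset.mem_filter.mp haT
      have hwa : wbase C a = C.prF a := wbase_of_memF C haF
      have hf0 : ¬ ((wbase C a : ℝ) ≤ x) := by rw [hwa]; push_neg; exact hax
      have hw' : wbase C' a = C.prF a := by
        rw [hw'F a (hmemF' a haF), hR2 a haF (hTnotS a haT)]
      rw [if_neg hf0, if_pos (by rw [hw']; exact haxθ), hremF a haF, hfull a haF, zero_add]
      exact (hnotS a haF (hTnotS a haT)).trans (hptle a)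
    have hTcard : t ≤ T.card := by
      have hbij : T.card
          = ((Finset.Icc 1 m).filter (fun j : ℕ => x < (j:ℝ) ∧ (j:ℝ) ≤ x + θ)).card := by
        apply Finset.card_bij (fun a _ => C.prF a)
        · intro a ha
          obtain ⟨haF, hc⟩ := Finset.mem_filter.mp ha
          exact Finset.mem_filter.mpr
            ⟨Finset.mem_Icc.mpr ⟨(hprFle a haF).1, (hprFle a haF).2⟩, hc⟩
        · intro a1 h1 a2 h2 he
          exact C.bijF.injOn
            (Finset.mem_coe.mpr (Finset.mem_filter.mp h1).1)
            (Finset.mem_coe.mpr (Finset.mem_filter.mp h2).1) he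
        · intro j hj
          obtain ⟨hj1, hj2⟩ := Finset.mem_filter.mp hj
          obtain ⟨hj1a, hj1b⟩ := Finset.mem_Icc.mp hj1
          obtain ⟨a, ha, hpa⟩ := C.bijF.surjOn (Set.mem_Icc.mpr ⟨hj1a, hj1b⟩)
          exact ⟨a, Finset.mem_filter.mpr ⟨Finset.mem_coe.mp ha, by rw [hpa]; exact hj2⟩, hpa⟩
      set x₀ := (⌊x⌋).toNat with hx₀
      have hx₀r : ((x₀ : ℕ) : ℝ) = ((⌊x⌋ : ℤ) : ℝ) := by
        have := Int.toNat_of_nonneg (Int.floor_nonneg.mpr hx)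
        exact_mod_cast congrArg (fun z : ℤ => (z : ℝ)) this
      have hsub : Finset.Icc (x₀ + 1) (x₀ + t)
          ⊆ (Finset.Icc 1 m).filter (fun j : ℕ => x < (j:ℝ) ∧ (j:ℝ) ≤ x + θ) := by
        intro j hj
        obtain ⟨hj1, hj2⟩ := Finset.mem_Icc.mp hj
        have hxj : x < (j : ℝ) := by
          have h1 : ((x₀ : ℕ) : ℝ) + 1 ≤ (j:ℝ) := by exact_mod_cast hj1
          have h2 : x < ((⌊x⌋ : ℤ) : ℝ) + 1 := Int.lt_floor_add_one x
          rw [hx₀r] at h1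
          linarith
        have hjθ : (j : ℝ) ≤ x + θ := by
          have h1 : (j : ℝ) ≤ ((x₀ : ℕ) : ℝ) + (t : ℝ) := by exact_mod_cast hj2
          have h2 : ((x₀ : ℕ) : ℝ) ≤ x := by rw [hx₀r]; exact Int.floor_le x
          rw [htθ] at h1
          linarith
        have hjm : j ≤ m := by
          have h1 : (j : ℝ) < (k₀ : ℝ) := lt_of_le_of_lt hjθ hcase
          have h2 : (k₀ : ℝ) ≤ (m : ℝ) + 1 := by exact_mod_cast hF3
          have h3 : (j : ℝ) < (m : ℝ) + 1 := lt_of_lt_of_le h1 h2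
          have h4 : j < m + 1 := by exact_mod_cast h3
          omega
        exact Finset.mem_filter.mpr ⟨Finset.mem_Icc.mpr ⟨by omega, hjm⟩, hxj, hjθ⟩
      calc t = (Finset.Icc (x₀+1) (x₀+t)).card := by rw [Nat.card_Icc]; omega
        _ ≤ _ := Finset.card_le_card hsub
        _ = T.card := hbij.symm
    -- sum up the gains over T
    have hsum1 : (T.card : ℝ) * pt q
        ≤ ∑ a ∈ T, ((if (wbase C' a : ℝ) ≤ x + θ then C'.rem a else 0)
            - (if (wbase C a : ℝ) ≤ x then C.rem a else 0)) := by
      rw [show (T.card : ℝ) * pt q = ∑ _a ∈ T, pt q by rw [Finset.sum_const, nsmul_eq_mul]]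
      exact Finset.sum_le_sum (fun a ha => by have := hTgain a ha; linarith)
    have hsum2 : ∑ a ∈ T, ((if (wbase C' a : ℝ) ≤ x + θ then C'.rem a else 0)
            - (if (wbase C a : ℝ) ≤ x then C.rem a else 0))
        ≤ ∑ a ∈ C.QF ∪ C.QP, ((if (wbase C' a : ℝ) ≤ x + θ then C'.rem a else 0)
            - (if (wbase C a : ℝ) ≤ x then C.rem a else 0)) :=
      Finset.sum_le_sum_of_subset_of_nonneg hTsub
        (fun a ha _ => by have := hpw a ha; linarith)
    have hsplit : ∑ a ∈ C.QF ∪ C.QP, ((if (wbase C' a : ℝ) ≤ x + θ then C'.rem a else 0)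
            - (if (wbase C a : ℝ) ≤ x then C.rem a else 0))
        = (∑ a ∈ C.QF ∪ C.QP, (if (wbase C' a : ℝ) ≤ x + θ then C'.rem a else 0))
            - ∑ a ∈ C.QF ∪ C.QP, (if (wbase C a : ℝ) ≤ x then C.rem a else 0) :=
      Finset.sum_sub_distrib _ _
    have hq0 : 0 ≤ (if (wbase C' q : ℝ) ≤ x + θ then C'.rem q else 0) := by
      split
      · rw [hremq]; exact (hp q).le
      · exact le_refl 0
    have hcard : ρ * pt q ≤ (T.card : ℝ) * pt q := by
      apply mul_le_mul_of_nonneg_right _ (hpt0 q).le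
      calc ρ ≤ θ := hθρ
        _ = (t : ℝ) := htθ.symm
        _ ≤ (T.card : ℝ) := by exact_mod_cast hTcard
    have hpq : p q ≤ (T.card : ℝ) * pt q := le_trans (hplt q).le hcard
    rw [hcov, hcov']
    linarith
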